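/- Let n ≥ 1, let A ∈ ℝ^{n×n} be symmetric, let D ∈ ℝ^{n×n} be diagonal, and let r > 0 be such that D + (r²−1)I is positive definite. Then the number of eigenvalues (counted with multiplicity) of the symmetric regularized Laplacian L^{sym}_{r²−1} = (D+(r²−1)I)^{-1/2} A (D+(r²−1)I)^{-1/2} that are strictly greater than 1/r is equal to the number of strictly negative eigenvalues (counted with multiplicity) of the Bethe-Hessian H_r = (r²−1)I + D − rA. -/

import Mathlib

open Matrix

/-- The positive semidefinite square root of a positive semidefinite matrix (the definition
`Matrix.PosSemidef.sqrt` of the older Mathlib, since removed, restated verbatim). -/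
noncomputable def Matrix.PosSemidef.sqrt {m : Type*} [Fintype m] [DecidableEq m] {𝕜 : Type*} [RCLike 𝕜]
    [PartialOrder 𝕜] [StarOrderedRing 𝕜]
    {M : Matrix m m 𝕜} (hM : M.PosSemidef) : Matrix m m 𝕜 :=
  hM.1.eigenvectorUnitary.1 * diagonal ((↑) ∘ (√·) ∘ hM.1.eigenvalues) *
  (star hM.1.eigenvectorUnitary : Matrix m m 𝕜)

/-- The number of eigenvalues of a real matrix `B`, counted with multiplicity, that are
strictly greater than `θ`. Junk value `0` if `B` is not symmetric. -/
noncomputable def countEigGT {n : ℕ} (B : Matrix (Fin n) (Fin n) ℝ) (θ : ℝ) : ℕ :=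
  if hB : B.IsHermitian then (Finset.univ.filter fun i => θ < hB.eigenvalues i).card else 0

/-- The number of eigenvalues of a real matrix `B`, counted with multiplicity, that are
strictly negative. Junk value `0` if `B` is not symmetric. -/
noncomputable def countEigNeg {n : ℕ} (B : Matrix (Fin n) (Fin n) ℝ) : ℕ :=
  if hB : B.IsHermitian then (Finset.univ.filter fun i => hB.eigenvalues i < 0).card else 0

lemma psd_sqrt_mul_self {m : Type*} [Fintype m] [DecidableEq m] {M : Matrix m m ℝ}
    (hM : M.PosSemidef) : hM.sqrt * hM.sqrt = M := by
  have hU : star (hM.1.eigenvectorUnitary : Matrix m m ℝ) * (hM.1.eigenvectorUnitary : Matrix m m ℝ) = 1 :=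
    Unitary.coe_star_mul_self _
  have hd : diagonal ((RCLike.ofReal : ℝ → ℝ) ∘ (√·) ∘ hM.1.eigenvalues) *
      diagonal ((RCLike.ofReal : ℝ → ℝ) ∘ (√·) ∘ hM.1.eigenvalues) =
      diagonal ((RCLike.ofReal : ℝ → ℝ) ∘ hM.1.eigenvalues) := by
    rw [diagonal_mul_diagonal]; congr 1; funext i
    simp [Real.mul_self_sqrt (hM.eigenvalues_nonneg i)]
  unfold Matrix.PosSemidef.sqrt
  conv_rhs => rw [hM.1.spectral_theorem, Unitary.conjStarAlgAut_apply]
  calc _ = (hM.1.eigenvectorUnitary : Matrix m m ℝ) *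
        (diagonal ((RCLike.ofReal : ℝ → ℝ) ∘ (√·) ∘ hM.1.eigenvalues) *
          (star (hM.1.eigenvectorUnitary : Matrix m m ℝ) * (hM.1.eigenvectorUnitary : Matrix m m ℝ)) *
        diagonal ((RCLike.ofReal : ℝ → ℝ) ∘ (√·) ∘ hM.1.eigenvalues)) *
        star (hM.1.eigenvectorUnitary : Matrix m m ℝ) := by simp only [Matrix.mul_assoc]
    _ = _ := by rw [hU, Matrix.mul_one, hd]

lemma psd_sqrt_herm {m : Type*} [Fintype m] [DecidableEq m] {M : Matrix m m ℝ}
    (hM : M.PosSemidef) : hM.sqrt.IsHermitian := by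
  unfold Matrix.IsHermitian Matrix.PosSemidef.sqrt
  simp [conjTranspose_mul, Matrix.mul_assoc, star_eq_conjTranspose]



namespace BetheAux

variable {n : ℕ}

lemma mulVec_dot (C : Matrix (Fin n) (Fin n) ℝ) (v w : Fin n → ℝ) :
    (C *ᵥ v) ⬝ᵥ w = v ⬝ᵥ (Cᵀ *ᵥ w) := by
  rw [dotProduct_mulVec, vecMul_transpose]

noncomputable def mulVecEquiv (C : Matrix (Fin n) (Fin n) ℝ) (h : IsUnit C.det) :
    (Fin n → ℝ) ≃ₗ[ℝ] (Fin n → ℝ) :=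
  LinearEquiv.ofLinear C.mulVecLin C⁻¹.mulVecLin
    (by rw [← mulVecLin_mul, mul_nonsing_inv _ h, mulVecLin_one])
    (by rw [← mulVecLin_mul, nonsing_inv_mul _ h, mulVecLin_one])

@[simp] lemma mulVecEquiv_apply (C : Matrix (Fin n) (Fin n) ℝ) (h : IsUnit C.det)
    (v : Fin n → ℝ) : mulVecEquiv C h v = C *ᵥ v := rfl

lemma single_indep (s : Finset (Fin n)) :
    LinearIndependent ℝ (fun i : s => (Pi.single (i : Fin n) 1 : Fin n → ℝ)) := by
  have h : LinearIndependent ℝ (fun i : Fin n => (Pi.single i 1 : Fin n → ℝ)) := by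
    have := (Pi.basisFun ℝ (Fin n)).linearIndependent
    simpa [funext (Pi.basisFun_apply ℝ (Fin n))] using this
  exact h.comp _ Subtype.val_injective

lemma span_single_rank (s : Finset (Fin n)) :
    Module.finrank ℝ (Submodule.span ℝ
      (Set.range fun i : s => (Pi.single (i : Fin n) 1 : Fin n → ℝ))) = s.card := by
  classical
  rw [finrank_span_eq_card (single_indep s), Fintype.card_coe]

lemma span_single_supp {s : Finset (Fin n)} {y : Fin n → ℝ}
    (hy : y ∈ Submodule.span ℝ (Set.range fun i : s => (Pi.single (i : Fin n) 1 : Fin n → ℝ)))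
    {i : Fin n} (hi : i ∉ s) : y i = 0 := by
  classical
  have hle : Submodule.span ℝ (Set.range fun i : s => (Pi.single (i : Fin n) 1 : Fin n → ℝ)) ≤
      LinearMap.ker (LinearMap.proj (R := ℝ) (φ := fun _ : Fin n => ℝ) i) := by
    rw [Submodule.span_le]
    rintro _ ⟨⟨j, hj⟩, rfl⟩
    have hij : i ≠ j := fun h => hi (h ▸ hj)
    simp [LinearMap.mem_ker, Pi.single_eq_of_ne hij]
  simpa using hle hy

section spectral

variable {B : Matrix (Fin n) (Fin n) ℝ} (hB : B.IsHermitian)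

lemma U_tmul : (hB.eigenvectorUnitary : Matrix (Fin n) (Fin n) ℝ)ᵀ *
    (hB.eigenvectorUnitary : Matrix (Fin n) (Fin n) ℝ) = 1 := by
  rw [← conjTranspose_eq_transpose_of_trivial, ← star_eq_conjTranspose]
  exact Unitary.coe_star_mul_self hB.eigenvectorUnitary

lemma U_mult : (hB.eigenvectorUnitary : Matrix (Fin n) (Fin n) ℝ) *
    (hB.eigenvectorUnitary : Matrix (Fin n) (Fin n) ℝ)ᵀ = 1 := by
  rw [← conjTranspose_eq_transpose_of_trivial, ← star_eq_conjTranspose]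
  exact Unitary.coe_mul_star_self hB.eigenvectorUnitary

lemma U_det : IsUnit ((hB.eigenvectorUnitary : Matrix (Fin n) (Fin n) ℝ)).det :=
  IsUnit.of_mul_eq_one _ (by rw [← det_mul, U_mult hB, det_one])

lemma quadOne (y : Fin n → ℝ) :
    ((hB.eigenvectorUnitary : Matrix (Fin n) (Fin n) ℝ) *ᵥ y) ⬝ᵥ
      ((hB.eigenvectorUnitary : Matrix (Fin n) (Fin n) ℝ) *ᵥ y) = ∑ i, y i * y i := by
  rw [mulVec_dot, mulVec_mulVec, U_tmul hB, one_mulVec]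
  rfl

lemma quadB (y : Fin n → ℝ) :
    ((hB.eigenvectorUnitary : Matrix (Fin n) (Fin n) ℝ) *ᵥ y) ⬝ᵥ
      (B *ᵥ ((hB.eigenvectorUnitary : Matrix (Fin n) (Fin n) ℝ) *ᵥ y)) =
      ∑ i, hB.eigenvalues i * (y i * y i) := by
  have hBU : B *ᵥ ((hB.eigenvectorUnitary : Matrix (Fin n) (Fin n) ℝ) *ᵥ y) =
      (hB.eigenvectorUnitary : Matrix (Fin n) (Fin n) ℝ) *ᵥ (diagonal hB.eigenvalues *ᵥ y) := by
    rw [mulVec_mulVec, mulVec_mulVec]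
    have hdg : diagonal ((RCLike.ofReal : ℝ → ℝ) ∘ hB.eigenvalues) = diagonal hB.eigenvalues := by
      simp [RCLike.ofReal_real_eq_id]
    have : B * (hB.eigenvectorUnitary : Matrix (Fin n) (Fin n) ℝ) =
        (hB.eigenvectorUnitary : Matrix (Fin n) (Fin n) ℝ) * diagonal hB.eigenvalues := by
      nth_rewrite 1 [hB.spectral_theorem]
      rw [Unitary.conjStarAlgAut_apply, star_eq_conjTranspose, conjTranspose_eq_transpose_of_trivial,
        mul_assoc ((hB.eigenvectorUnitary : Matrix (Fin n) (Fin n) ℝ) * _) _ _,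
        U_tmul hB, mul_one, hdg]
    rw [this]
  rw [hBU, mulVec_dot, mulVec_mulVec, U_tmul hB, one_mulVec]
  simp only [dotProduct, mulVec_diagonal]
  exact Finset.sum_congr rfl fun i _ => by ring

lemma exists_subspace (θ ε : ℝ) :
    ∃ W : Submodule ℝ (Fin n → ℝ),
      Module.finrank ℝ W =
        (Finset.univ.filter fun i => ε * hB.eigenvalues i < ε * θ).card ∧
      ∀ x ∈ W, x ≠ 0 → ε * (x ⬝ᵥ B *ᵥ x) < ε * θ * (x ⬝ᵥ x) := by
  classical
  set s : Finset (Fin n) := Finset.univ.filter (fun i => ε * hB.eigenvalues i < ε * θ) with hs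
  refine ⟨(Submodule.span ℝ (Set.range fun i : s => (Pi.single (i : Fin n) 1 : Fin n → ℝ))).map
    (mulVecEquiv _ (U_det hB)).toLinearMap, ?_, ?_⟩
  · rw [LinearEquiv.finrank_map_eq]
    exact span_single_rank s
  · rintro x hx hx0
    obtain ⟨y, hyV, rfl⟩ := Submodule.mem_map.mp hx
    have hy0 : y ≠ 0 := fun h => hx0 (by simp [h])
    simp only [LinearEquiv.coe_coe, mulVecEquiv_apply]
    rw [quadB hB, quadOne hB, Finset.mul_sum, Finset.mul_sum]
    apply Finset.sum_lt_sum
    · intro i _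
      by_cases hi : i ∈ s
      · have hlt : ε * hB.eigenvalues i < ε * θ := (Finset.mem_filter.mp hi).2
        nlinarith [mul_self_nonneg (y i)]
      · rw [span_single_supp hyV hi]
        simp
    · obtain ⟨j, hj⟩ := Function.ne_iff.mp hy0
      have hj' : y j ≠ 0 := by simpa using hj
      have hjs : j ∈ s := by
        by_contra h
        exact hj' (span_single_supp hyV h)
      have hlt : ε * hB.eigenvalues j < ε * θ := (Finset.mem_filter.mp hjs).2
      exact ⟨j, Finset.mem_univ j, by nlinarith [mul_self_pos.mpr hj']⟩

lemma le_card (θ ε : ℝ) (W : Submodule ℝ (Fin n → ℝ))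
    (hW : ∀ x ∈ W, x ≠ 0 → ε * (x ⬝ᵥ B *ᵥ x) < ε * θ * (x ⬝ᵥ x)) :
    Module.finrank ℝ W ≤
      (Finset.univ.filter fun i => ε * hB.eigenvalues i < ε * θ).card := by
  classical
  by_contra hcon
  push_neg at hcon
  set s : Finset (Fin n) := Finset.univ.filter (fun i => ε * hB.eigenvalues i < ε * θ) with hs
  set W' : Submodule ℝ (Fin n → ℝ) :=
    (Submodule.span ℝ (Set.range fun i : (sᶜ : Finset (Fin n)) =>
      (Pi.single (i : Fin n) 1 : Fin n → ℝ))).map (mulVecEquiv _ (U_det hB)).toLinearMap with hW'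
  have hW'rank : Module.finrank ℝ W' = (sᶜ : Finset (Fin n)).card := by
    rw [hW', LinearEquiv.finrank_map_eq]
    exact span_single_rank _
  have hsum := Submodule.finrank_sup_add_finrank_inf_eq W W'
  have hle : Module.finrank ℝ ↥(W ⊔ W') ≤ n := by
    refine le_trans (Submodule.finrank_le _) ?_
    simp [Module.finrank_pi]
  have hcard : s.card + (sᶜ : Finset (Fin n)).card = n := by
    simpa using Finset.card_add_card_compl s
  have hpos : 0 < Module.finrank ℝ ↥(W ⊓ W') := by omega
  obtain ⟨⟨x, hxmem⟩, hx0⟩ := Module.finrank_pos_iff_exists_ne_zero.mp hpos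
  have hx0' : x ≠ 0 := fun h => hx0 (Subtype.ext h)
  have hxW : x ∈ W := hxmem.1
  have hxW' : x ∈ W' := hxmem.2
  rw [hW'] at hxW'
  obtain ⟨y, hyV, hyx⟩ := Submodule.mem_map.mp hxW'
  have hge : ε * θ * (x ⬝ᵥ x) ≤ ε * (x ⬝ᵥ B *ᵥ x) := by
    rw [← hyx]
    simp only [LinearEquiv.coe_coe, mulVecEquiv_apply]
    rw [quadB hB, quadOne hB, Finset.mul_sum, Finset.mul_sum]
    apply Finset.sum_le_sum
    intro i _
    by_cases hyi : y i = 0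
    · simp [hyi]
    · have his : i ∉ s := fun h =>
        hyi (span_single_supp hyV (by simpa using h))
      have hge' : ε * θ ≤ ε * hB.eigenvalues i := by
        rw [hs, Finset.mem_filter] at his
        push_neg at his
        exact his (Finset.mem_univ i)
      nlinarith [mul_self_nonneg (y i)]
  exact absurd (hW x hxW hx0') (not_lt.mpr hge)

end spectral

end BetheAux
namespace BetheAux

section spec2

variable {n : ℕ} {B : Matrix (Fin n) (Fin n) ℝ} (hB : B.IsHermitian)

lemma gt_exists (θ : ℝ) :
    ∃ W : Submodule ℝ (Fin n → ℝ),
      Module.finrank ℝ W = (Finset.univ.filter fun i => θ < hB.eigenvalues i).card ∧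
      ∀ x ∈ W, x ≠ 0 → θ * (x ⬝ᵥ x) < x ⬝ᵥ B *ᵥ x := by
  classical
  obtain ⟨W, h1, h2⟩ := exists_subspace hB θ (-1)
  refine ⟨W, ?_, fun x hx hx0 => by have := h2 x hx hx0; linarith⟩
  rw [h1]
  congr 1
  refine Finset.filter_congr fun i _ => ?_
  constructor <;> intro h <;> [skip; skip] <;> · dsimp at * <;> linarith

lemma gt_le (θ : ℝ) (W : Submodule ℝ (Fin n → ℝ))
    (hW : ∀ x ∈ W, x ≠ 0 → θ * (x ⬝ᵥ x) < x ⬝ᵥ B *ᵥ x) :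
    Module.finrank ℝ W ≤ (Finset.univ.filter fun i => θ < hB.eigenvalues i).card := by
  classical
  have h := le_card hB θ (-1) W (fun x hx hx0 => by have := hW x hx hx0; nlinarith)
  refine le_trans h (le_of_eq ?_)
  congr 1
  refine Finset.filter_congr fun i _ => ?_
  constructor <;> intro h <;> · dsimp at * <;> linarith

lemma neg_exists :
    ∃ W : Submodule ℝ (Fin n → ℝ),
      Module.finrank ℝ W = (Finset.univ.filter fun i => hB.eigenvalues i < 0).card ∧
      ∀ x ∈ W, x ≠ 0 → x ⬝ᵥ B *ᵥ x < 0 := by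
  classical
  obtain ⟨W, h1, h2⟩ := exists_subspace hB 0 1
  refine ⟨W, ?_, fun x hx hx0 => by have := h2 x hx hx0; nlinarith⟩
  rw [h1]
  congr 1
  exact Finset.filter_congr fun i _ => by constructor <;> intro h <;> · dsimp at * <;> linarith

lemma neg_le (W : Submodule ℝ (Fin n → ℝ))
    (hW : ∀ x ∈ W, x ≠ 0 → x ⬝ᵥ B *ᵥ x < 0) :
    Module.finrank ℝ W ≤ (Finset.univ.filter fun i => hB.eigenvalues i < 0).card := by
  classical
  have h := le_card hB 0 1 W (fun x hx hx0 => by have := hW x hx hx0; nlinarith)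
  refine le_trans h (le_of_eq ?_)
  congr 1
  exact Finset.filter_congr fun i _ => by constructor <;> intro h <;> · dsimp at * <;> linarith

end spec2

end BetheAux

open BetheAux in
/-- For symmetric `A`, diagonal `D`, `r > 0` with `D + (r²−1)I` positive
definite, the number of eigenvalues (with multiplicity) of the symmetric regularized
Laplacian `L^{sym}_{r²−1} = (D+(r²−1)I)^{-1/2} A (D+(r²−1)I)^{-1/2}` strictly greater
than `1/r` equals the number of strictly negative eigenvalues (with multiplicity) of the
Bethe-Hessian `H_r = (r²−1)I + D − rA`. -/
theorem count_regSymLaplacian_gt_eq_count_betheHessian_neg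
    (n : ℕ) (hn : 1 ≤ n)
    (A D : Matrix (Fin n) (Fin n) ℝ)
    (hA : Aᵀ = A) (hD : D.IsDiag)
    (r : ℝ) (hr : 0 < r)
    (hM : (D + (r ^ 2 - 1) • (1 : Matrix (Fin n) (Fin n) ℝ)).PosDef) :
    countEigGT ((hM.posSemidef.sqrt)⁻¹ * A * (hM.posSemidef.sqrt)⁻¹) (1 / r) =
      countEigNeg ((r ^ 2 - 1) • (1 : Matrix (Fin n) (Fin n) ℝ) + D - r • A) := by
  classical
  set S := hM.posSemidef.sqrt with hSdef
  have hS : S.IsHermitian := psd_sqrt_herm hM.posSemidef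
  have hSt : Sᵀ = S := by
    have h := hS
    rwa [Matrix.IsHermitian, conjTranspose_eq_transpose_of_trivial] at h
  have hSS : S * S = D + (r ^ 2 - 1) • 1 := psd_sqrt_mul_self hM.posSemidef
  have hdet : IsUnit S.det := by
    refine isUnit_iff_ne_zero.mpr fun h0 => ?_
    have hdm : S.det * S.det = (D + (r ^ 2 - 1) • (1 : Matrix (Fin n) (Fin n) ℝ)).det := by
      rw [← det_mul, hSS]
    rw [h0, mul_zero] at hdm
    exact (ne_of_gt hM.det_pos) hdm.symm
  have hSinvT : (S⁻¹)ᵀ = S⁻¹ := by rw [transpose_nonsing_inv, hSt]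
  have hL : ((S⁻¹) * A * (S⁻¹)).IsHermitian := by
    rw [Matrix.IsHermitian, conjTranspose_eq_transpose_of_trivial, transpose_mul, transpose_mul,
      hSinvT, hA, ← mul_assoc]
  have hDt : Dᵀ = D := hD.isSymm
  have hH : (((r ^ 2 - 1) • (1 : Matrix (Fin n) (Fin n) ℝ) + D - r • A)).IsHermitian := by
    rw [Matrix.IsHermitian, conjTranspose_eq_transpose_of_trivial, transpose_sub, transpose_add,
      transpose_smul, transpose_smul, transpose_one, hDt, hA]
  have key : ∀ y : Fin n → ℝ,
      (S⁻¹ *ᵥ y) ⬝ᵥ (((r ^ 2 - 1) • (1 : Matrix (Fin n) (Fin n) ℝ) + D - r • A) *ᵥ (S⁻¹ *ᵥ y)) =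
        y ⬝ᵥ y - r * (y ⬝ᵥ ((S⁻¹ * A * S⁻¹) *ᵥ y)) := by
    have h1 : S⁻¹ * (S * S) * S⁻¹ = 1 := by
      rw [← mul_assoc, nonsing_inv_mul _ hdet, one_mul, mul_nonsing_inv _ hdet]
    have hmat : S⁻¹ * ((r ^ 2 - 1) • (1 : Matrix (Fin n) (Fin n) ℝ) + D - r • A) * S⁻¹ =
        1 - r • (S⁻¹ * A * S⁻¹) := by
      have hHm : (r ^ 2 - 1) • (1 : Matrix (Fin n) (Fin n) ℝ) + D - r • A = S * S - r • A := by
        rw [hSS]; abel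
      rw [hHm, Matrix.mul_sub, Matrix.sub_mul, h1, mul_smul_comm, smul_mul_assoc, mul_assoc]
    intro y
    rw [mulVec_dot, hSinvT, mulVec_mulVec, mulVec_mulVec, hmat, Matrix.sub_mulVec, one_mulVec,
      smul_mulVec, dotProduct_sub, dotProduct_smul, smul_eq_mul]
  have hdetinv : IsUnit (S⁻¹).det := by
    have : S⁻¹ * S = 1 := nonsing_inv_mul _ hdet
    exact IsUnit.of_mul_eq_one _ (by rw [← det_mul, this, det_one])
  simp only [countEigGT, countEigNeg, dif_pos hL, dif_pos hH]
  apply le_antisymm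
  · obtain ⟨W, hWrank, hWgt⟩ := gt_exists hL (1 / r)
    rw [← hWrank, ← LinearEquiv.finrank_map_eq (mulVecEquiv (S⁻¹) hdetinv) W]
    apply neg_le hH
    rintro x hx hx0
    obtain ⟨y, hyW, rfl⟩ := Submodule.mem_map.mp hx
    have hy0 : y ≠ 0 := fun h => hx0 (by simp [h])
    have hgt := hWgt y hyW hy0
    simp only [LinearEquiv.coe_coe, mulVecEquiv_apply]
    rw [key y]
    have h2 : r * (1 / r * (y ⬝ᵥ y)) = y ⬝ᵥ y := by field_simp
    linarith [(mul_lt_mul_iff_right₀ hr).mpr hgt, h2]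
  · obtain ⟨W, hWrank, hWneg⟩ := neg_exists hH
    rw [← hWrank, ← LinearEquiv.finrank_map_eq (mulVecEquiv S hdet) W]
    apply gt_le hL
    rintro y hy hy0
    obtain ⟨x, hxW, rfl⟩ := Submodule.mem_map.mp hy
    have hx0 : x ≠ 0 := fun h => hy0 (by simp [h])
    simp only [LinearEquiv.coe_coe, mulVecEquiv_apply] at hy0 ⊢
    have hinv : S⁻¹ *ᵥ (S *ᵥ x) = x := by
      rw [mulVec_mulVec, nonsing_inv_mul _ hdet, one_mulVec]
    have hneg := hWneg x hxW hx0
    have hkey := key (S *ᵥ x)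
    rw [hinv] at hkey
    rw [hkey] at hneg
    have h2 : r * (1 / r * ((S *ᵥ x) ⬝ᵥ (S *ᵥ x))) = (S *ᵥ x) ⬝ᵥ (S *ᵥ x) := by field_simp
    have h3 : r * (1 / r * ((S *ᵥ x) ⬝ᵥ (S *ᵥ x))) < r * ((S *ᵥ x) ⬝ᵥ ((S⁻¹ * A * S⁻¹) *ᵥ (S *ᵥ x))) := by
      linarith
    exact (mul_lt_mul_iff_right₀ hr).mp h3
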